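/- Let b divide n, let x ∈ 𝔽₂ⁿ and y ∈ 𝔽₂^{n+b}. If x ∈ D_b(y), then |D_b(y)| ≥ |D_b(x)|. -/

import Mathlib

/-- The `b`-burst-deletion ball of `x`: all vectors obtained from `x` by deleting
`b` consecutive coordinates. -/
def delBall (b : ℕ) {n : ℕ} (x : Fin n → Bool) : Set (Fin (n - b) → Bool) :=
  { y | ∃ i ≤ n - b, ∀ j : Fin (n - b),
      y j = if (j : ℕ) < i
        then x ⟨(j : ℕ), by have := j.isLt; omega⟩
        else x ⟨(j : ℕ) + b, by have := j.isLt; omega⟩ }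

/-- The `b`-burst-insertion ball of `x`: all vectors `v` of length `n + b`
such that `x` is obtained from `v` by deleting `b` consecutive coordinates. -/
def insBall (b : ℕ) {n : ℕ} (x : Fin n → Bool) : Set (Fin (n + b) → Bool) :=
  { v | ∃ i ≤ n, ∀ j : Fin n,
      x j = if (j : ℕ) < i
        then v ⟨(j : ℕ), by have := j.isLt; omega⟩
        else v ⟨(j : ℕ) + b, by have := j.isLt; omega⟩ }

/-- Number of runs (maximal blocks of consecutive equal coordinates) of a binary vector. -/
def numRuns {m : ℕ} (z : Fin m → Bool) : ℕ :=
  (Finset.univ.filter (fun i : Fin m =>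
    (i : ℕ) = 0 ∨ z i ≠ z ⟨(i : ℕ) - 1, by have := i.isLt; omega⟩)).card

/-- Every run of `z` has length at most `f`: every window of `f + 1` consecutive
coordinates contains two different values. -/
def maxRunLe {m : ℕ} (f : ℕ) (z : Fin m → Bool) : Prop :=
  ∀ i : ℕ, ∀ hi : i + f < m, ∃ j : ℕ, ∃ hj : j ≤ f,
    z ⟨i + j, by omega⟩ ≠ z ⟨i, by omega⟩

/-- The Varshamov–Tenengolts code `VT_a(n)`. -/
def VT (n a : ℕ) : Set (Fin n → Bool) :=
  { x | (∑ i : Fin n, ((i : ℕ) + 1) * (x i).toNat) ≡ a [MOD n + 1] }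

/-- The shifted Varshamov–Tenengolts code `SVT_{c,d}(n,P)`. -/
def SVT (n P c d : ℕ) : Set (Fin n → Bool) :=
  { x | (∑ i : Fin n, ((i : ℕ) + 1) * (x i).toNat) ≡ c [MOD P] ∧
        (∑ i : Fin n, (x i).toNat) ≡ d [MOD 2] }

/-- The `(2,1)`-burst-correcting code `C_{2,1}(n,a,c)`. -/
def C21 (n a c : ℕ) : Set (Fin n → Bool) :=
  { x | (∑ i : Fin n, (x i).toNat) ≡ c [MOD 4] ∧
        (∑ i : Fin n, ((i : ℕ) + 1) * (x i).toNat) ≡ a [MOD 2 * n - 1] }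

/-- Row `r` (0-indexed) of the `b × (n / b)` array `A_b(x)`: the entry in
column `j` (0-indexed) is `x (j * b + r)`. -/
def arrRow {n : ℕ} (b : ℕ) (x : Fin n → Bool) (r : Fin b) : Fin (n / b) → Bool :=
  fun j => x ⟨(j : ℕ) * b + (r : ℕ), by
    have hj : (j : ℕ) + 1 ≤ n / b := j.isLt
    have hr := r.isLt
    have h1 : ((j : ℕ) + 1) * b ≤ n / b * b := Nat.mul_le_mul_right b hj
    have h2 : n / b * b ≤ n := Nat.div_mul_le_self n b
    have h3 : ((j : ℕ) + 1) * b = (j : ℕ) * b + b := by ring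
    omega⟩

/-- Non-consecutive burst deletion ball: all vectors obtained from `x` by deleting
`a` coordinates whose positions all lie within a window of `b` consecutive positions. -/
def ncDelBall (a b : ℕ) {n : ℕ} (x : Fin n → Bool) : Set (Fin (n - a) → Bool) :=
  { y | ∃ f : Fin (n - a) → Fin n, StrictMono f ∧ (∀ j, y j = x (f j)) ∧
      ∃ i : ℕ, ∀ p : Fin n, p ∉ Set.range f → i ≤ (p : ℕ) ∧ (p : ℕ) < i + b }

/-- Non-consecutive burst insertion ball: all vectors `v` of length `n + a` from which
`x` is obtained by a non-consecutive deletion burst of `a` deletions within a window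
of `b` consecutive positions. -/
def ncInsBall (a b : ℕ) {n : ℕ} (x : Fin n → Bool) : Set (Fin (n + a) → Bool) :=
  { v | ∃ f : Fin n → Fin (n + a), StrictMono f ∧ (∀ j, x j = v (f j)) ∧
      ∃ i : ℕ, ∀ p : Fin (n + a), p ∉ Set.range f → i ≤ (p : ℕ) ∧ (p : ℕ) < i + b }

/-- The vector obtained from `x` by deleting the coordinate at (0-indexed) position `k`. -/
def delOne {n : ℕ} (x : Fin n → Bool) (k : ℕ) : Fin (n - 1) → Bool :=
  fun j => if (j : ℕ) < k
    then x ⟨(j : ℕ), by have := j.isLt; omega⟩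
    else x ⟨(j : ℕ) + 1, by have := j.isLt; omega⟩

/-- The `(2,1)`-burst ball of `x`: all results of deleting two adjacent coordinates
of `x` and inserting one bit at the same position. -/
def d21Ball {n : ℕ} (x : Fin n → Bool) : Set (Fin (n - 1) → Bool) :=
  { y | ∃ i : ℕ, ∃ hi : i + 1 < n, ∃ a : Bool,
      ∀ j : Fin (n - 1), y j =
        if (j : ℕ) < i then x ⟨(j : ℕ), by have := j.isLt; omega⟩
        else if (j : ℕ) = i then a
        else x ⟨(j : ℕ) + 1, by have := j.isLt; omega⟩ }


namespace BurstAux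

/-- Deletion of the burst `[i, i+b)` from `u`, as a total function of `i : ℕ`. -/
def delAt (b : ℕ) {m : ℕ} (u : Fin m → Bool) (i : ℕ) : Fin (m - b) → Bool :=
  fun j => if (j : ℕ) < i then u ⟨(j : ℕ), by have := j.isLt; omega⟩
    else u ⟨(j : ℕ) + b, by have := j.isLt; omega⟩

/-- `u` extended to all of `ℕ` by `false`. -/
def extB {m : ℕ} (u : Fin m → Bool) : ℕ → Bool :=
  fun t => if h : t < m then u ⟨t, h⟩ else false

lemma delBall_eq_coe (b : ℕ) {m : ℕ} (u : Fin m → Bool) :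
    delBall b u = ↑((Finset.range (m - b + 1)).image (delAt b u)) := by
  ext z
  simp only [delBall, Set.mem_setOf_eq, Finset.coe_image, Set.mem_image,
    Finset.mem_coe, Finset.mem_range]
  constructor
  · rintro ⟨i, hi, hz⟩
    exact ⟨i, by omega, by funext j; exact (hz j).symm⟩
  · rintro ⟨i, hi, hz⟩
    refine ⟨i, by omega, fun j => ?_⟩
    rw [← hz]; rfl

lemma delAt_eq_iff (b : ℕ) {m : ℕ} (u : Fin m → Bool) {i j : ℕ}
    (hij : i ≤ j) (hj : j ≤ m - b) :
    delAt b u i = delAt b u j ↔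
      ∀ t, i ≤ t → t < j → extB u t = extB u (t + b) := by
  constructor
  · intro hEq t hit htj
    have ht : t < m - b := by omega
    have h2 := congrFun hEq ⟨t, ht⟩
    simp only [delAt] at h2
    rw [if_neg (by omega), if_pos (by omega)] at h2
    simp only [extB]
    rw [dif_pos (by omega), dif_pos (by omega)]
    exact h2.symm
  · intro hstep
    funext p
    simp only [delAt]
    rcases lt_or_ge (p : ℕ) i with h1 | h1
    · rw [if_pos h1, if_pos (by omega)]
    rcases lt_or_ge (p : ℕ) j with h2 | h2
    · rw [if_neg (by omega), if_pos h2]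
      have h3 := hstep (p : ℕ) h1 h2
      have hp := p.isLt
      simp only [extB] at h3
      rw [dif_pos (by omega), dif_pos (by omega)] at h3
      exact h3.symm
    · rw [if_neg (by omega), if_neg (by omega)]

lemma card_image_delAt (b : ℕ) {m : ℕ} (u : Fin m → Bool) :
    ∀ N, N ≤ m - b →
      ((Finset.range (N + 1)).image (delAt b u)).card
        = 1 + ((Finset.range N).filter
            (fun t => extB u t ≠ extB u (t + b))).card := by
  intro N
  induction N with
  | zero => intro _; simp
  | succ N ih =>
    intro hN
    rw [Finset.range_add_one, Finset.image_insert]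
    by_cases hmem : extB u N = extB u (N + b)
    · have hself : delAt b u (N + 1) ∈ (Finset.range (N + 1)).image (delAt b u) := by
        refine Finset.mem_image.mpr ⟨N, Finset.mem_range.mpr (by omega), ?_⟩
        exact (delAt_eq_iff b u (Nat.le_succ N) hN).mpr
          (fun t h1 h2 => by rw [(by omega : t = N)]; exact hmem)
      rw [Finset.insert_eq_self.mpr hself, ih (by omega), Finset.range_add_one,
        Finset.filter_insert, if_neg (by simpa using hmem)]
    · have hnot : delAt b u (N + 1) ∉ (Finset.range (N + 1)).image (delAt b u) := by
        intro hcon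
        obtain ⟨i, hi, hEq⟩ := Finset.mem_image.mp hcon
        have hi' : i ≤ N + 1 := by have := Finset.mem_range.mp hi; omega
        exact hmem ((delAt_eq_iff b u hi' hN).mp hEq N
          (by have := Finset.mem_range.mp hi; omega) (by omega))
      rw [Finset.card_insert_of_notMem hnot, ih (by omega), Finset.range_add_one,
        Finset.filter_insert, if_pos (by simpa using hmem),
        Finset.card_insert_of_notMem (by simp)]
      omega

lemma ncard_delBall (b : ℕ) {m : ℕ} (u : Fin m → Bool) :
    (delBall b u).ncard
      = 1 + ((Finset.range (m - b)).filter
          (fun t => extB u t ≠ extB u (t + b))).card := by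
  rw [delBall_eq_coe, Set.ncard_coe_finset, card_image_delAt b u (m - b) le_rfl]

end BurstAux

/-- if `x ∈ D_b(y)` (equivalently `y ∈ I_b(x)`), then `|D_b(y)| ≥ |D_b(x)|`. -/
theorem delBall_ncard_le_of_mem_delBall (n b : ℕ) (hb : 0 < b) (hdvd : b ∣ n)
    (x : Fin n → Bool) (y : Fin (n + b) → Bool) (h : y ∈ insBall b x) :
    (delBall b x).ncard ≤ (delBall b y).ncard := by
  classical
  obtain ⟨k, hk, hx⟩ := h
  rw [BurstAux.ncard_delBall, BurstAux.ncard_delBall]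
  set X := BurstAux.extB x with hXdef
  set Y := BurstAux.extB y with hYdef
  have hXY : ∀ t, t < n → X t = if t < k then Y t else Y (t + b) := by
    intro t ht
    have h1 := hx ⟨t, ht⟩
    simp only [hXdef, hYdef, BurstAux.extB]
    rw [dif_pos ht]
    by_cases h2 : t < k
    · rw [if_pos h2, dif_pos (by omega)]
      rw [h1, if_pos (by simpa using h2)]
    · rw [if_neg h2, dif_pos (by omega)]
      rw [h1, if_neg (by simpa using h2)]
  have hnb : n + b - b = n := by omega
  rw [hnb]
  apply Nat.add_le_add_left
  set f : ℕ → ℕ := fun t =>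
    if t + b < k then t else if k ≤ t then t + b
    else if Y t ≠ Y (t + b) then t else t + b with hfdef
  have key : ∀ s, (f s = s ∧ s < k) ∨ (f s = s + b ∧ k ≤ s + b) := by
    intro s
    simp only [hfdef]
    split_ifs with h1 h2 h3
    · exact Or.inl ⟨rfl, by omega⟩
    · exact Or.inr ⟨rfl, by omega⟩
    · exact Or.inl ⟨rfl, by omega⟩
    · exact Or.inr ⟨rfl, by omega⟩
  apply Finset.card_le_card_of_injOn f
  · intro t ht
    simp only [Finset.mem_coe, Finset.mem_filter, Finset.mem_range] at ht ⊢
    obtain ⟨htn, htm⟩ := ht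
    have ht1 : t < n := by omega
    have ht2 : t + b < n := by omega
    rw [hXY t ht1, hXY (t + b) ht2] at htm
    simp only [hfdef]
    by_cases h1 : t + b < k
    · rw [if_pos h1]
      rw [if_pos (by omega), if_pos h1] at htm
      exact ⟨ht1, htm⟩
    · rw [if_neg h1]
      by_cases h2 : k ≤ t
      · rw [if_pos h2]
        rw [if_neg (by omega), if_neg (by omega)] at htm
        exact ⟨ht2, htm⟩
      · rw [if_neg h2]
        rw [if_pos (by omega), if_neg (by omega)] at htm
        by_cases h3 : Y t ≠ Y (t + b)
        · rw [if_pos h3]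
          exact ⟨ht1, h3⟩
        · rw [if_neg h3]
          push_neg at h3
          refine ⟨ht2, ?_⟩
          rw [← h3]
          exact htm
  · intro t _ t' _ hEq
    rcases key t with ⟨e1, l1⟩ | ⟨e1, l1⟩ <;> rcases key t' with ⟨e2, l2⟩ | ⟨e2, l2⟩ <;>
      rw [e1, e2] at hEq <;> omega
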